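/- Let η: kQ → M_n(k[x_D | D ∈ P]) be the algebra homomorphism determined by a dimer quiver Q on a torus, sending vertex e_i to e_{ii} and arrow a to (∏_{a ∈ D} x_D)·e_{h(a),t(a)}, where P is the set of perfect matchings. If p and q are paths such that pa and qa are both unit cycles for some arrow a, then η(p) = η(q). Consequently the superpotential ideal I = ⟨p − q | ∃ a with pa, qa unit cycles⟩ is contained in ker η. -/
import Mathlib

lemma stmt_6_aux {k Arrow M : Type} [Field k] [Fintype M] [DecidableEq Arrow]
    (matching : M → Finset Arrow) (c : List Arrow) :
    ((c.map (fun b => ∏ D ∈ Finset.univ.filter (fun D => b ∈ matching D),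
        MvPolynomial.X D)).prod : MvPolynomial M k)
    = ∏ D : M, (MvPolynomial.X D : MvPolynomial M k) ^
        (c.countP (fun x => decide (x ∈ matching D))) := by
  induction c with
  | nil => simp
  | cons b c ih =>
    simp only [List.map_cons, List.prod_cons, ih, List.countP_cons]
    rw [Finset.prod_filter, ← Finset.prod_mul_distrib]
    apply Finset.prod_congr rfl
    intro D _
    by_cases h : b ∈ matching D <;> simp [h, Finset.prod_ite_eq', pow_add, mul_comm]

/-- For the perfect-matching homomorphism η of a dimer quiver (η̄ of a path is
the product over its arrows b of ∏_{b ∈ D} x_D), if pa and qa are both unit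
cycles (each perfect matching contains exactly one arrow of each unit cycle,
counted with multiplicity), then η̄(p) = η̄(q); hence the superpotential ideal
lies in ker η. -/
theorem stmt_6 {k Arrow M : Type} [Field k] [Fintype M] [DecidableEq Arrow]
    (matching : M → Finset Arrow)
    (unitCycles : Set (List Arrow))
    (hmatch : ∀ (D : M), ∀ c ∈ unitCycles,
      c.countP (fun x => decide (x ∈ matching D)) = 1)
    (a : Arrow) (p q : List Arrow)
    (hp : (a :: p) ∈ unitCycles) (hq : (a :: q) ∈ unitCycles) :
    ((p.map (fun b => ∏ D ∈ Finset.univ.filter (fun D => b ∈ matching D),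
        MvPolynomial.X D)).prod : MvPolynomial M k)
    = (q.map (fun b => ∏ D ∈ Finset.univ.filter (fun D => b ∈ matching D),
        MvPolynomial.X D)).prod := by
  set f : Arrow → MvPolynomial M k := fun b =>
    ∏ D ∈ Finset.univ.filter (fun D => b ∈ matching D), MvPolynomial.X D with hf
  have hfa : f a ≠ 0 := by
    rw [hf]
    apply Finset.prod_ne_zero_iff.2
    intro D _
    exact MvPolynomial.X_ne_zero D
  apply mul_left_cancel₀ hfa
  have key : ∀ c ∈ unitCycles, ((c.map f).prod : MvPolynomial M k)
      = ∏ D : M, MvPolynomial.X D := by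
    intro c hc
    rw [stmt_6_aux]
    apply Finset.prod_congr rfl
    intro D _
    rw [hmatch D c hc, pow_one]
  have h1 := key _ hp
  have h2 := key _ hq
  simp only [List.map_cons, List.prod_cons] at h1 h2
  rw [h1, h2]
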